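/- Let k be a field, S = k[X_0,X_1,X_2,X_3], and let ℓ ∈ S_1 be a nonzero linear form. Let h_1, …, h_m ∈ S_1 be linear forms such that for each i the pair (ℓ, h_i) is linearly independent and for all i ≠ j the triple (ℓ, h_i, h_j) is linearly independent (equivalently, the images of the h_i in S/ℓS are pairwise non-proportional nonzero linear forms). Let I = ⋂_{i=1}^m (ℓ, h_i). Then the homogeneous components of I are: I_n = ℓ·S_{n-1} if n < m, and I_n = ℓ·S_{n-1} + h_1⋯h_m·S_{n-m} if n ≥ m. -/

import Mathlib

open MvPolynomial

/-- The space of homogeneous forms of (integer) degree `n` in `k[X₀,…]`, with the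
convention that it is `0` for negative `n`. -/
noncomputable def homDegZ (k : Type*) [CommSemiring k] (σ : Type*) (n : ℤ) :
    Submodule k (MvPolynomial σ k) :=
  if 0 ≤ n then homogeneousSubmodule σ k n.toNat else ⊥

section AuxStmt6
open Matrix


lemma degree_one_single {d : Fin 4 →₀ ℕ} (hd : d.degree = 1) :
    ∃ i, d = Finsupp.single i 1 := by
  have hne : d ≠ 0 := by
    intro h0
    rw [h0, map_zero] at hd
    omega
  obtain ⟨i, hi⟩ := Finsupp.support_nonempty_iff.mpr hne
  have hdi : d i ≠ 0 := Finsupp.mem_support_iff.mp hi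
  have hle : d i ≤ 1 := hd ▸ Finsupp.le_degree i d
  refine ⟨i, ?_⟩
  ext j
  rcases eq_or_ne j i with rfl | hji
  · simp; omega
  · simp only [Finsupp.single_apply, if_neg (Ne.symm hji)]
    by_contra hj
    have hjs : j ∈ d.support := Finsupp.mem_support_iff.mpr hj
    have hsub : ({i, j} : Finset (Fin 4)) ⊆ d.support := by
      intro x hx
      rcases Finset.mem_insert.mp hx with rfl | hx
      · exact hi
      · rwa [Finset.mem_singleton.mp hx]
    have hsum : ∑ x ∈ ({i, j} : Finset (Fin 4)), d x ≤ d.degree :=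
      Finset.sum_le_sum_of_subset hsub
    rw [Finset.sum_pair (Ne.symm hji), hd] at hsum
    omega

variable {k : Type*} [Field k]

noncomputable def lin : (Fin 4 → k) →ₗ[k] MvPolynomial (Fin 4) k where
  toFun c := ∑ j, C (c j) * X j
  map_add' c d := by simp [add_mul, Finset.sum_add_distrib]
  map_smul' a c := by
    simp [Finset.smul_sum, MvPolynomial.smul_eq_C_mul, mul_assoc, _root_.map_mul]

lemma lin_apply (c : Fin 4 → k) : lin c = ∑ j, C (c j) * X j := rfl

lemma coeff_lin (c : Fin 4 → k) (j : Fin 4) :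
    coeff (Finsupp.single j 1) (lin c) = c j := by
  rw [lin_apply, MvPolynomial.coeff_sum]
  rw [Finset.sum_eq_single j]
  · simp
  · intro i _ hij
    simp only [coeff_C_mul, coeff_X']
    rw [if_neg (by simp [Finsupp.single_eq_single_iff, hij])]
    simp
  · simp

lemma lin_injective : Function.Injective (lin (k := k)) := by
  intro c d hcd
  funext j
  rw [← coeff_lin c j, ← coeff_lin d j, hcd]

lemma lin_isHomogeneous (c : Fin 4 → k) : (lin c).IsHomogeneous 1 := by
  rw [lin_apply]
  apply IsHomogeneous.sum
  intro i _
  simpa using (isHomogeneous_C _ (c i)).mul (isHomogeneous_X _ i)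

lemma exists_lin {p : MvPolynomial (Fin 4) k}
    (hp : p ∈ homogeneousSubmodule (Fin 4) k 1) : ∃ c, lin c = p := by
  rw [mem_homogeneousSubmodule] at hp
  refine ⟨fun j => coeff (Finsupp.single j 1) p, ?_⟩
  ext d
  by_cases hd : ∃ i, d = Finsupp.single i 1
  · obtain ⟨i, rfl⟩ := hd
    rw [coeff_lin]
  · have hd0 : coeff d p = 0 := by
      by_contra hne
      refine hd (degree_one_single ?_)
      rw [Finsupp.degree_eq_weight_one]
      exact hp hne
    rw [hd0, lin_apply, MvPolynomial.coeff_sum]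
    apply Finset.sum_eq_zero
    intro i _
    simp only [coeff_C_mul, coeff_X']
    rw [if_neg (fun he => hd ⟨i, he.symm⟩)]
    simp

noncomputable def phiM (M : Matrix (Fin 4) (Fin 4) k) :
    MvPolynomial (Fin 4) k →ₐ[k] MvPolynomial (Fin 4) k :=
  aeval (fun i => lin (M i))

@[simp] lemma phiM_X (M : Matrix (Fin 4) (Fin 4) k) (i : Fin 4) :
    phiM M (X i) = lin (M i) := aeval_X _ _

lemma vecMul_eq_sum (c : Fin 4 → k) (M : Matrix (Fin 4) (Fin 4) k) :
    Matrix.vecMul c M = ∑ j, c j • M j := by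
  funext i
  simp [Matrix.vecMul, dotProduct, Finset.sum_apply]

lemma phiM_lin (M : Matrix (Fin 4) (Fin 4) k) (c : Fin 4 → k) :
    phiM M (lin c) = lin (Matrix.vecMul c M) := by
  rw [lin_apply, map_sum, _root_.vecMul_eq_sum, map_sum]
  apply Finset.sum_congr rfl
  intro j _
  rw [_root_.map_mul, _root_.map_smul]
  simp [phiM, MvPolynomial.smul_eq_C_mul, algebraMap_eq]

lemma phiM_comp (M N : Matrix (Fin 4) (Fin 4) k) :
    (phiM M).comp (phiM N) = phiM (N * M) := by
  apply MvPolynomial.algHom_ext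
  intro i
  simp only [AlgHom.comp_apply, phiM_X, phiM_lin]
  have : (N * M) i = Matrix.vecMul (N i) M := by
    funext j
    simp [Matrix.mul_apply, Matrix.vecMul, dotProduct]
  rw [this]

lemma phiM_one : phiM (1 : Matrix (Fin 4) (Fin 4) k) = AlgHom.id k _ := by
  apply MvPolynomial.algHom_ext
  intro i
  simp only [phiM_X, AlgHom.coe_id, id_eq, lin_apply, Matrix.one_apply]
  rw [Finset.sum_eq_single i] <;> simp +contextual [eq_comm]

noncomputable def PhiM {M : Matrix (Fin 4) (Fin 4) k} (hM : IsUnit M) :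
    MvPolynomial (Fin 4) k ≃ₐ[k] MvPolynomial (Fin 4) k :=
  AlgEquiv.ofAlgHom (phiM M) (phiM (↑hM.unit⁻¹))
    (by rw [phiM_comp,
          show ((↑hM.unit⁻¹ : Matrix (Fin 4) (Fin 4) k) * M) = 1 by
            simpa using hM.unit.inv_mul]
        exact phiM_one)
    (by rw [phiM_comp,
          show (M * (↑hM.unit⁻¹ : Matrix (Fin 4) (Fin 4) k)) = 1 by
            simpa using hM.unit.mul_inv]
        exact phiM_one)

@[simp] lemma PhiM_apply {M : Matrix (Fin 4) (Fin 4) k} (hM : IsUnit M)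
    (p : MvPolynomial (Fin 4) k) : PhiM hM p = phiM M p := rfl

@[simp] lemma PhiM_symm_apply {M : Matrix (Fin 4) (Fin 4) k} (hM : IsUnit M)
    (p : MvPolynomial (Fin 4) k) : (PhiM hM).symm p = phiM (↑hM.unit⁻¹) p := rfl

noncomputable def gsub : Fin 4 → MvPolynomial (Fin 4) k := ![0, 0, X 2, X 3]

lemma aeval_gsub_monomial_good (d : Fin 4 →₀ ℕ) (c : k) (h0 : d 0 = 0) (h1 : d 1 = 0) :
    aeval (gsub (k := k)) (monomial d c) = monomial d c := by
  rw [aeval_monomial, monomial_eq]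
  congr 1
  apply Finsupp.prod_congr
  intro i hi
  have hi' : d i ≠ 0 := Finsupp.mem_support_iff.mp hi
  have : i = 2 ∨ i = 3 := by
    rcases i with ⟨iv, hiv⟩
    interval_cases iv
    · exact absurd (by exact h0) hi'
    · exact absurd (by exact h1) hi'
    · left; rfl
    · right; rfl
  rcases this with rfl | rfl <;> rfl

lemma aeval_gsub_monomial_bad (d : Fin 4 →₀ ℕ) (c : k) (h : d 0 ≠ 0 ∨ d 1 ≠ 0) :
    aeval (gsub (k := k)) (monomial d c) = 0 := by
  rw [aeval_monomial]
  have : (d.prod fun i e => gsub (k := k) i ^ e) = 0 := by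
    rcases h with h | h
    · exact Finset.prod_eq_zero (Finsupp.mem_support_iff.mpr h)
        (by show (0 : MvPolynomial (Fin 4) k) ^ d 0 = 0; exact zero_pow h)
    · exact Finset.prod_eq_zero (Finsupp.mem_support_iff.mpr h)
        (by show (0 : MvPolynomial (Fin 4) k) ^ d 1 = 0; exact zero_pow h)
  rw [Finsupp.prod] at this ⊢
  rw [this, mul_zero]

lemma span_X01_eq_ker :
    (Ideal.span {(X 0 : MvPolynomial (Fin 4) k), X 1}) =
      RingHom.ker ((aeval (gsub (k := k))).toRingHom) := by
  apply le_antisymm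
  · rw [Ideal.span_le]
    rintro x hx
    simp only [Set.mem_insert_iff, Set.mem_singleton_iff] at hx
    rcases hx with rfl | rfl <;>
      simp [RingHom.mem_ker, gsub]
  · intro p hp
    rw [RingHom.mem_ker] at hp
    rw [show ({(X 0 : MvPolynomial (Fin 4) k), X 1} : Set _) =
        X '' ({0, 1} : Set (Fin 4)) by rw [Set.image_pair]]
    rw [mem_ideal_span_X_image]
    intro m hm
    by_contra hcon
    push_neg at hcon
    have hm0 : m 0 = 0 := by simpa using hcon 0 (by simp)
    have hm1 : m 1 = 0 := by simpa using hcon 1 (by simp)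
    have hcoeff : coeff m ((aeval (gsub (k := k))).toRingHom p) = coeff m p := by
      conv_lhs => rw [p.as_sum, map_sum, MvPolynomial.coeff_sum]
      rw [Finset.sum_eq_single m]
      · rw [show ((aeval (gsub (k:=k))).toRingHom) (monomial m (coeff m p)) =
            monomial m (coeff m p) from aeval_gsub_monomial_good m _ hm0 hm1]
        simp
      · intro d hd hdm
        by_cases hgood : d 0 = 0 ∧ d 1 = 0
        · rw [show ((aeval (gsub (k:=k))).toRingHom) (monomial d (coeff d p)) =
              monomial d (coeff d p) from aeval_gsub_monomial_good d _ hgood.1 hgood.2]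
          simp [coeff_monomial, hdm]
        · push_neg at hgood
          rw [show ((aeval (gsub (k:=k))).toRingHom) (monomial d (coeff d p)) =
              0 from aeval_gsub_monomial_bad d _ (by tauto)]
          simp
      · intro hms
        simp [MvPolynomial.notMem_support_iff.mp hms]
    rw [hp] at hcoeff
    simp only [coeff_zero] at hcoeff
    exact (Finsupp.mem_support_iff.mp hm) hcoeff.symm

lemma isPrime_span_X01 :
    (Ideal.span {(X 0 : MvPolynomial (Fin 4) k), X 1}).IsPrime := by
  rw [span_X01_eq_ker]
  exact RingHom.ker_isPrime _

lemma exists_equiv_fin4 {α : Type*} [Fintype α] [DecidableEq α]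
    (hcard : Fintype.card α = 4) (f : Fin 2 → α) (hf : Function.Injective f) :
    ∃ e : Fin 4 ≃ α, e 0 = f 0 ∧ e 1 = f 1 := by
  classical
  have hc1 : Fintype.card {x : α // x ∈ Set.range f} = 2 := by
    calc Fintype.card {x : α // x ∈ Set.range f} = Fintype.card (Fin 2) :=
          Fintype.card_congr (Equiv.ofInjective f hf).symm
      _ = 2 := Fintype.card_fin 2
  have hc2 : Fintype.card {x : α // x ∉ Set.range f} = 2 := by
    have := Fintype.card_subtype_compl (fun x : α => x ∈ Set.range f)
    rw [hcard, hc1] at this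
    exact this
  let e2 : Fin 2 ≃ {x : α // x ∉ Set.range f} := (Fintype.equivFinOfCardEq hc2).symm
  let e : Fin 4 ≃ α :=
    (finSumFinEquiv (m := 2) (n := 2)).symm.trans
      ((Equiv.sumCongr (Equiv.ofInjective f hf) e2).trans
        (Equiv.sumCompl (fun x : α => x ∈ Set.range f)))
  have key : ∀ i : Fin 2, e (Fin.castAdd 2 i) = f i := by
    intro i
    show (Equiv.sumCompl _) ((Equiv.sumCongr (Equiv.ofInjective f hf) e2)
      (finSumFinEquiv.symm (Fin.castAdd 2 i))) = f i
    rw [finSumFinEquiv_symm_apply_castAdd]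
    rfl
  exact ⟨e, key 0, key 1⟩


lemma exists_unit_matrix {a b : Fin 4 → k} (hab : LinearIndependent k ![a, b]) :
    ∃ M : Matrix (Fin 4) (Fin 4) k, IsUnit M ∧ M 0 = a ∧ M 1 = b := by
  classical
  set s : Set (Fin 4 → k) := Set.range ![a, b] with hs_def
  have hs : LinearIndepOn k id s := (linearIndepOn_id_range_iff hab.injective).mpr hab
  let B := Module.Basis.extend hs
  haveI : Fintype (hs.extend (Set.subset_univ s)) := FiniteDimensional.fintypeBasisIndex B
  have hcard : Fintype.card (hs.extend (Set.subset_univ s)) = 4 := by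
    rw [← Module.finrank_eq_card_basis B, Module.finrank_fin_fun]
  have hmem : ∀ i : Fin 2, ![a, b] i ∈ hs.extend (Set.subset_univ s) :=
    fun i => hs.subset_extend _ ⟨i, rfl⟩
  let f : Fin 2 → (hs.extend (Set.subset_univ s)) := fun i => ⟨![a, b] i, hmem i⟩
  have hf : Function.Injective f := by
    intro i j hij
    exact hab.injective (Subtype.ext_iff.mp hij)
  obtain ⟨e, he0, he1⟩ := exists_equiv_fin4 hcard f hf
  let Cb : Module.Basis (Fin 4) k (Fin 4 → k) := B.reindex e.symm
  have hCb : ∀ i : Fin 4, Cb i = B (e i) := by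
    intro i; rw [Module.Basis.reindex_apply, Equiv.symm_symm]
  have hCb0 : Cb 0 = a := by
    rw [hCb 0, he0, Module.Basis.extend_apply_self]; rfl
  have hCb1 : Cb 1 = b := by
    rw [hCb 1, he1, Module.Basis.extend_apply_self]; rfl
  refine ⟨Matrix.of (fun i j => Cb i j), ?_, ?_, ?_⟩
  · have htrans : (Matrix.of (fun i j => Cb i j)) =
        ((Pi.basisFun k (Fin 4)).toMatrix Cb)ᵀ := by
      funext i j
      rw [Matrix.transpose_apply, Module.Basis.toMatrix_apply, Pi.basisFun_repr]
      rfl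
    rw [Matrix.isUnit_iff_isUnit_det, htrans, Matrix.det_transpose,
      ← Matrix.isUnit_iff_isUnit_det]
    haveI := Module.Basis.invertibleToMatrix (Pi.basisFun k (Fin 4)) Cb
    exact isUnit_of_invertible _
  · funext j
    exact congrFun hCb0 j
  · funext j
    exact congrFun hCb1 j

lemma span_lin_eq_map {a b : Fin 4 → k} {M : Matrix (Fin 4) (Fin 4) k}
    (hM : IsUnit M) (hMa : M 0 = a) (hMb : M 1 = b) :
    Ideal.span {lin a, lin b} =
      Ideal.map (PhiM hM) (Ideal.span {(X 0 : MvPolynomial (Fin 4) k), X 1}) := by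
  rw [Ideal.map_span, Set.image_pair]
  congr 2
  · rw [PhiM_apply, phiM_X, hMa]
  · rw [PhiM_apply, phiM_X, hMb]

lemma isPrime_span_lin {a b : Fin 4 → k} (hab : LinearIndependent k ![a, b]) :
    (Ideal.span {lin a, lin b}).IsPrime := by
  obtain ⟨M, hM, hMa, hMb⟩ := exists_unit_matrix hab
  rw [span_lin_eq_map hM hMa hMb]
  haveI := isPrime_span_X01 (k := k)
  exact Ideal.map_isPrime_of_equiv _

lemma lin_mem_span_X01 {d : Fin 4 → k}
    (hd : lin d ∈ Ideal.span {(X 0 : MvPolynomial (Fin 4) k), X 1}) :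
    d 2 = 0 ∧ d 3 = 0 := by
  rw [show ({(X 0 : MvPolynomial (Fin 4) k), X 1} : Set _) =
      X '' ({0, 1} : Set (Fin 4)) by rw [Set.image_pair], mem_ideal_span_X_image] at hd
  constructor
  · by_contra h2
    obtain ⟨i, hi, hine⟩ := hd (Finsupp.single 2 1)
      (MvPolynomial.mem_support_iff.mpr (by rw [coeff_lin]; exact h2))
    rcases hi with rfl | hi
    · exact hine (by simp [Finsupp.single_apply])
    · rw [Set.mem_singleton_iff.mp hi] at hine
      exact hine (by simp [Finsupp.single_apply])
  · by_contra h3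
    obtain ⟨i, hi, hine⟩ := hd (Finsupp.single 3 1)
      (MvPolynomial.mem_support_iff.mpr (by rw [coeff_lin]; exact h3))
    rcases hi with rfl | hi
    · exact hine (by simp [Finsupp.single_apply])
    · rw [Set.mem_singleton_iff.mp hi] at hine
      exact hine (by simp [Finsupp.single_apply])

lemma notmem_span_lin {a b c : Fin 4 → k} (habc : LinearIndependent k ![a, b, c]) :
    lin c ∉ Ideal.span {lin a, lin b} := by
  have hab : LinearIndependent k ![a, b] := by
    have := habc.comp (Fin.castLE (by omega : 2 ≤ 3)) (Fin.castLE_injective _)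
    convert this using 1
    funext i
    fin_cases i <;> rfl
  obtain ⟨M, hM, hMa, hMb⟩ := exists_unit_matrix hab
  intro hmem
  rw [span_lin_eq_map hM hMa hMb, Ideal.mem_map_of_equiv] at hmem
  obtain ⟨x, hxJ, hx⟩ := hmem
  set N : Matrix (Fin 4) (Fin 4) k := ↑hM.unit⁻¹ with hN
  have hxval : x = lin (Matrix.vecMul c N) := by
    have := congrArg (PhiM hM).symm hx
    rw [AlgEquiv.symm_apply_apply] at this
    rw [this, PhiM_symm_apply, phiM_lin]
  rw [hxval] at hxJ
  obtain ⟨h2, h3⟩ := lin_mem_span_X01 hxJ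
  set d : Fin 4 → k := Matrix.vecMul c N with hd
  have hcd : c = Matrix.vecMul d M := by
    rw [hd, Matrix.vecMul_vecMul]
    rw [show N * M = 1 by rw [hN]; simpa using hM.unit.inv_mul]
    rw [Matrix.vecMul_one]
  have hc : c = d 0 • a + d 1 • b := by
    funext j
    rw [hcd]
    simp only [Matrix.vecMul, dotProduct, Fin.sum_univ_four, h2, h3,
      Pi.add_apply, Pi.smul_apply, smul_eq_mul, zero_mul, add_zero]
    rw [hMa, hMb]
  have hzero : ∑ i : Fin 3, (![d 0, d 1, -1] : Fin 3 → k) i • ![a, b, c] i = 0 := by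
    rw [Fin.sum_univ_three]
    show d 0 • a + d 1 • b + (-1 : k) • c = 0
    rw [neg_one_smul, hc]
    abel
  have := Fintype.linearIndependent_iff.mp habc ![d 0, d 1, -1] hzero 2
  simp at this

lemma hc_mul {p : MvPolynomial (Fin 4) k} {e : ℕ} (hp : p.IsHomogeneous e)
    (g : MvPolynomial (Fin 4) k) (n : ℕ) :
    homogeneousComponent n (p * g) =
      if e ≤ n then p * homogeneousComponent (n - e) g else 0 := by
  have hexp : p * g =
      ∑ j ∈ Finset.range (g.totalDegree + 1), p * homogeneousComponent j g := by
    rw [← Finset.mul_sum, sum_homogeneousComponent]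
  rw [hexp, map_sum]
  have hterm : ∀ j, homogeneousComponent n (p * homogeneousComponent j g) =
      if n = e + j then p * homogeneousComponent j g else 0 := by
    intro j
    exact homogeneousComponent_of_mem
      ((mem_homogeneousSubmodule _ _).mpr
        (hp.mul (homogeneousComponent_isHomogeneous j g)))
  rw [Finset.sum_congr rfl fun j _ => hterm j]
  by_cases he : e ≤ n
  · rw [if_pos he, Finset.sum_eq_single (n - e)]
    · rw [if_pos (by omega)]
    · intro j _ hj
      rw [if_neg (by omega)]
    · intro hnot
      rw [if_pos (by omega)]
      have hz : homogeneousComponent (n - e) g = 0 := by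
        apply homogeneousComponent_eq_zero
        simp only [Finset.mem_range, not_lt] at hnot
        omega
      rw [hz, mul_zero]
  · rw [if_neg he]
    apply Finset.sum_eq_zero
    intro j _
    rw [if_neg (by omega)]

lemma final_lemma {p q : MvPolynomial (Fin 4) k} {d e : ℕ}
    (hp : p.IsHomogeneous d) (hq : q.IsHomogeneous e) (n : ℕ) :
    Submodule.restrictScalars k (Ideal.span {p, q}) ⊓ homogeneousSubmodule (Fin 4) k n =
      Submodule.map (LinearMap.mulLeft k p) (homDegZ k (Fin 4) ((n : ℤ) - d)) ⊔
        Submodule.map (LinearMap.mulLeft k q) (homDegZ k (Fin 4) ((n : ℤ) - e)) := by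
  apply le_antisymm
  · intro f hf
    obtain ⟨hfI, hfn⟩ := Submodule.mem_inf.mp hf
    rw [Submodule.restrictScalars_mem, Ideal.mem_span_pair] at hfI
    obtain ⟨u, v, huv⟩ := hfI
    have hf' : f = homogeneousComponent n f := by
      rw [homogeneousComponent_of_mem hfn, if_pos rfl]
    have hdecomp : f = homogeneousComponent n (p * u) + homogeneousComponent n (q * v) := by
      conv_lhs => rw [hf']
      rw [← map_add]
      congr 1
      rw [mul_comm p u, mul_comm q v, huv]
    rw [hdecomp, hc_mul hp u n, hc_mul hq v n]
    apply Submodule.add_mem_sup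
    · split_ifs with hd
      · refine ⟨homogeneousComponent (n - d) u, ?_, rfl⟩
        unfold homDegZ
        rw [if_pos (by omega)]
        have : ((n : ℤ) - d).toNat = n - d := by omega
        rw [this]
        exact homogeneousComponent_mem _ _
      · exact zero_mem _
    · split_ifs with hd
      · refine ⟨homogeneousComponent (n - e) v, ?_, rfl⟩
        unfold homDegZ
        rw [if_pos (by omega)]
        have : ((n : ℤ) - e).toNat = n - e := by omega
        rw [this]
        exact homogeneousComponent_mem _ _
      · exact zero_mem _
  · apply sup_le
    · rintro x ⟨g, hg, rfl⟩
      unfold homDegZ at hg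
      split_ifs at hg with h0
      · apply Submodule.mem_inf.mpr
        constructor
        · rw [Submodule.restrictScalars_mem]
          show p * g ∈ Ideal.span {p, q}
          exact Ideal.mul_mem_right _ _ (Ideal.subset_span (by simp))
        · show (p * g).IsHomogeneous n
          have hg' : g.IsHomogeneous ((n : ℤ) - d).toNat :=
            (mem_homogeneousSubmodule _ _).mp hg
          have : d + ((n : ℤ) - d).toNat = n := by omega
          exact this ▸ hp.mul hg'
      · have hg0 : g = 0 := by simpa using hg
        rw [hg0]
        simp only [map_zero]
        exact zero_mem _
    · rintro x ⟨g, hg, rfl⟩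
      unfold homDegZ at hg
      split_ifs at hg with h0
      · apply Submodule.mem_inf.mpr
        constructor
        · rw [Submodule.restrictScalars_mem]
          show q * g ∈ Ideal.span {p, q}
          exact Ideal.mul_mem_right _ _ (Ideal.subset_span (by simp))
        · show (q * g).IsHomogeneous n
          have hg' : g.IsHomogeneous ((n : ℤ) - e).toNat :=
            (mem_homogeneousSubmodule _ _).mp hg
          have : e + ((n : ℤ) - e).toNat = n := by omega
          exact this ▸ hq.mul hg'
      · have hg0 : g = 0 := by simpa using hg
        rw [hg0]
        simp only [map_zero]
        exact zero_mem _

end AuxStmt6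

/-- Let `S = k[X₀,X₁,X₂,X₃]`, `ℓ ∈ S₁` nonzero, and `h₁, …, h_m ∈ S₁`
linear forms with each `(ℓ, hᵢ)` linearly independent and each `(ℓ, hᵢ, hⱼ)` (`i ≠ j`)
linearly independent.  For `I = ⋂ᵢ (ℓ, hᵢ)` the homogeneous components are
`I_n = ℓ·S_{n-1}` for `n < m` and `I_n = ℓ·S_{n-1} + h₁⋯h_m·S_{n-m}` for `n ≥ m`
(with the convention `S_j = 0` for `j < 0`). -/
theorem stmt_6 {k : Type*} [Field k]
    (ℓ : MvPolynomial (Fin 4) k) (hℓ0 : ℓ ≠ 0)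
    (hℓ1 : ℓ ∈ homogeneousSubmodule (Fin 4) k 1)
    (m : ℕ) (h : Fin m → MvPolynomial (Fin 4) k)
    (hh1 : ∀ i, h i ∈ homogeneousSubmodule (Fin 4) k 1)
    (hpair : ∀ i, LinearIndependent k ![ℓ, h i])
    (htriple : ∀ i j, i ≠ j → LinearIndependent k ![ℓ, h i, h j])
    (I : Ideal (MvPolynomial (Fin 4) k)) (hI : I = ⨅ i, Ideal.span {ℓ, h i}) :
    ∀ n : ℕ,
      (n < m →
        Submodule.restrictScalars k I ⊓ homogeneousSubmodule (Fin 4) k n =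
          Submodule.map (LinearMap.mulLeft k ℓ) (homDegZ k (Fin 4) ((n : ℤ) - 1))) ∧
      (m ≤ n →
        Submodule.restrictScalars k I ⊓ homogeneousSubmodule (Fin 4) k n =
          Submodule.map (LinearMap.mulLeft k ℓ) (homDegZ k (Fin 4) ((n : ℤ) - 1)) ⊔
            Submodule.map (LinearMap.mulLeft k (∏ i, h i))
              (homDegZ k (Fin 4) ((n : ℤ) - (m : ℤ)))) := by
  obtain ⟨a, ha⟩ := exists_lin hℓ1
  choose b hb using fun i => exists_lin (hh1 i)
  have hpv : ∀ i, LinearIndependent k ![a, b i] := by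
    intro i
    apply LinearIndependent.of_comp (lin (k := k))
    have : (⇑(lin (k := k)) ∘ ![a, b i]) = ![ℓ, h i] := by
      funext j
      fin_cases j <;> simp [ha, hb]
    rw [this]
    exact hpair i
  have htv : ∀ i j, i ≠ j → LinearIndependent k ![a, b i, b j] := by
    intro i j hij
    apply LinearIndependent.of_comp (lin (k := k))
    have : (⇑(lin (k := k)) ∘ ![a, b i, b j]) = ![ℓ, h i, h j] := by
      funext j'
      fin_cases j' <;> simp [ha, hb]
    rw [this]
    exact htriple i j hij
  have hprime : ∀ i, (Ideal.span {ℓ, h i}).IsPrime := by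
    intro i
    rw [← ha, ← hb i]
    exact isPrime_span_lin (hpv i)
  have hnot : ∀ i j, i ≠ j → h j ∉ Ideal.span {ℓ, h i} := by
    intro i j hij
    rw [← ha, ← hb i, ← hb j]
    exact notmem_span_lin (htv i j hij)
  have key : ∀ s : Finset (Fin m), (⨅ i ∈ s, Ideal.span {ℓ, h i}) ≤
      Ideal.span {ℓ, ∏ i ∈ s, h i} := by
    intro s
    induction s using Finset.induction_on with
    | empty =>
      intro f _
      rw [Finset.prod_empty]
      exact Ideal.mem_span_pair.mpr ⟨0, f, by ring⟩
    | @insert a' s' ha' IH =>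
      intro f hf
      simp only [Ideal.mem_iInf] at hf
      have hf1 : f ∈ Ideal.span {ℓ, h a'} := hf a' (Finset.mem_insert_self a' s')
      have hf2 : f ∈ ⨅ i ∈ s', Ideal.span {ℓ, h i} := by
        simp only [Ideal.mem_iInf]
        exact fun i hi => hf i (Finset.mem_insert_of_mem hi)
      obtain ⟨c, d, hcd⟩ := Ideal.mem_span_pair.mp (IH hf2)
      have hmem : d * ∏ i ∈ s', h i ∈ Ideal.span {ℓ, h a'} := by
        have heq : d * ∏ i ∈ s', h i = f - c * ℓ := by
          rw [← hcd]; ring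
        rw [heq]
        exact Ideal.sub_mem _ hf1
          (Ideal.mul_mem_left _ _ (Ideal.subset_span (by simp)))
      haveI := hprime a'
      have hprod_not : (∏ i ∈ s', h i) ∉ Ideal.span {ℓ, h a'} := by
        intro hcon
        obtain ⟨i, hi, hmemi⟩ := (Ideal.IsPrime.prod_mem_iff).mp hcon
        exact hnot a' i (fun he => ha' (he ▸ hi)) hmemi
      have hd : d ∈ Ideal.span {ℓ, h a'} :=
        ((hprime a').mem_or_mem hmem).resolve_right hprod_not
      obtain ⟨c', d', hcd'⟩ := Ideal.mem_span_pair.mp hd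
      refine Ideal.mem_span_pair.mpr ⟨c + c' * ∏ i ∈ s', h i, d', ?_⟩
      rw [Finset.prod_insert ha', ← hcd]
      rw [← hcd']
      ring
  have hIeq : I = Ideal.span {ℓ, ∏ i, h i} := by
    rw [hI]
    apply le_antisymm
    · exact le_trans (le_iInf₂ fun i _ => iInf_le _ i) (key Finset.univ)
    · apply le_iInf
      intro i
      apply Ideal.span_le.mpr
      rintro x hx
      simp only [Set.mem_insert_iff, Set.mem_singleton_iff] at hx
      rcases hx with rfl | rfl
      · exact Ideal.subset_span (by simp)
      · obtain ⟨c, hc⟩ := Finset.dvd_prod_of_mem h (Finset.mem_univ i)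
        rw [hc]
        exact Ideal.mul_mem_right _ _ (Ideal.subset_span (by simp))
  have hP : (∏ i, h i).IsHomogeneous m := by
    have := MvPolynomial.IsHomogeneous.prod Finset.univ h (fun _ => 1)
      (fun i _ => (mem_homogeneousSubmodule _ _).mp (hh1 i))
    simpa using this
  have hL : ℓ.IsHomogeneous 1 := (mem_homogeneousSubmodule _ _).mp hℓ1
  intro n
  have hfin := final_lemma hL hP n
  simp only [Nat.cast_one] at hfin
  constructor
  · intro hnm
    rw [hIeq, hfin]
    have hbot : homDegZ k (Fin 4) ((n : ℤ) - (m : ℕ)) = ⊥ := by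
      unfold homDegZ
      rw [if_neg (by omega)]
    rw [hbot, Submodule.map_bot, sup_bot_eq]
  · intro hmn
    rw [hIeq, hfin]
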